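/- arXiv:0909.3208 — 3 statements merged into one kernel-verified Lean document; each statement's English description precedes it below -/
import Mathlib

section
/- In a dual net, the relation on points defined by 'noncollinear or equal' (parallelism) is an equivalence relation. -/
/-- In a dual net, the relation on points defined by
"noncollinear or equal" (parallelism) is an equivalence relation. -/
theorem dual_net_parallel_equivalence
    {P L : Type} (inc : P → L → Prop)
    -- two distinct points are incident with at most one common line
    (huniq : ∀ ⦃x y : P⦄ ⦃l m : L⦄, inc x l → inc y l → inc x m → inc y m →
      x = y ∨ l = m)
    -- for every point z and line B not through z, there is a unique point z'
    -- on B not collinear with z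
    (hnet : ∀ (z : P) (B : L), ¬ inc z B →
      ∃! z' : P, inc z' B ∧ ¬ ∃ l : L, inc z l ∧ inc z' l) :
    Equivalence (fun x y : P => x = y ∨ ¬ ∃ l : L, inc x l ∧ inc y l) := by
  constructor
  · intro x; exact Or.inl rfl
  · rintro x y (rfl | h)
    · exact Or.inl rfl
    · exact Or.inr fun ⟨l, hy, hx⟩ => h ⟨l, hx, hy⟩
  · rintro x y z (rfl | hxy) hyz
    · exact hyz
    rcases hyz with rfl | hyz
    · exact Or.inr hxy
    by_contra hc
    push_neg at hc
    obtain ⟨hxz, B, hxB, hzB⟩ := hc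
    have hyB : ¬ inc y B := fun hy => hxy ⟨B, hxB, hy⟩
    obtain ⟨w, _, huw⟩ := hnet y B hyB
    have hx := huw x ⟨hxB, fun ⟨l, hyl, hxl⟩ => hxy ⟨l, hxl, hyl⟩⟩
    have hz := huw z ⟨hzB, fun ⟨l, hyl, hzl⟩ => hyz ⟨l, hyl, hzl⟩⟩
    exact hxz (hx.trans hz.symm)
end

section
/- In a thick generalized quadrangle, a regular point x is projective if and only if every triad of points containing x has a center. -/
/-- A (thick) generalized quadrangle. -/
structure GenQuadrangle where
  P : Type
  Ln : Type
  inc : P → Ln → Prop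
  /-- (PL): no pair of distinct points is incident with a pair of distinct lines -/
  pl : ∀ ⦃x y : P⦄ ⦃l m : Ln⦄, inc x l → inc y l → inc x m → inc y m → x = y ∨ l = m
  /-- thickness: every point is incident with at least three lines -/
  thickPt : ∀ x : P, ∃ l₁ l₂ l₃ : Ln, l₁ ≠ l₂ ∧ l₁ ≠ l₃ ∧ l₂ ≠ l₃ ∧
    inc x l₁ ∧ inc x l₂ ∧ inc x l₃
  /-- thickness: every line is incident with at least three points -/
  thickLn : ∀ l : Ln, ∃ x₁ x₂ x₃ : P, x₁ ≠ x₂ ∧ x₁ ≠ x₃ ∧ x₂ ≠ x₃ ∧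
    inc x₁ l ∧ inc x₂ l ∧ inc x₃ l
  /-- (GQ): for every non-incident point-line pair (x,l) there are a unique point y
  and a unique line m with x I m I y I l -/
  gq : ∀ (x : P) (l : Ln), ¬ inc x l → ∃! q : P × Ln, inc x q.2 ∧ inc q.1 q.2 ∧ inc q.1 l

namespace GenQuadrangle

variable (G : GenQuadrangle)

/-- Two points are collinear if some line is incident with both. -/
def collinear (x y : G.P) : Prop := ∃ l : G.Ln, G.inc x l ∧ G.inc y l

/-- Two points are opposite if they are not collinear. -/
def opp (x y : G.P) : Prop := ¬ G.collinear x y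

/-- The perp {x,y}^⊥ of a pair of points. -/
def perp (x y : G.P) : Set G.P := {z | G.collinear z x ∧ G.collinear z y}

/-- X^⊥ for a set of points X. -/
def perpSet (S : Set G.P) : Set G.P := {z | ∀ u ∈ S, G.collinear z u}

/-- The span {x,y}^⊥⊥ of a pair of points. -/
def span (x y : G.P) : Set G.P := G.perpSet (G.perp x y)

/-- A point x is regular if every span {x,y}^⊥⊥ (y opposite x) is a perp of a pair
of opposite points. -/
def regular (x : G.P) : Prop :=
  ∀ y : G.P, G.opp x y → ∃ u v : G.P, G.opp u v ∧ G.span x y = G.perp u v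

/-- A point x is projective if it is regular and every pair of distinct perps
through x meets in a unique point (i.e. the dual net Γ*_x is a dual affine plane). -/
def projective (x : G.P) : Prop :=
  G.regular x ∧ ∀ y z : G.P, G.opp x y → G.opp x z → G.perp x y ≠ G.perp x z →
    ∃! w : G.P, w ∈ G.perp x y ∧ w ∈ G.perp x z

/-- A triad: three pairwise opposite points. -/
def triad (x y z : G.P) : Prop := G.opp x y ∧ G.opp y z ∧ G.opp x z

/-- A center of a triad: a point collinear with all three. -/
def center (w x y z : G.P) : Prop := G.collinear w x ∧ G.collinear w y ∧ G.collinear w z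

end GenQuadrangle

namespace GenQuadrangle

variable {G : GenQuadrangle}

lemma collinear_refl (x : G.P) : G.collinear x x := by
  obtain ⟨l₁, l₂, l₃, _, _, _, h₁, _, _⟩ := G.thickPt x
  exact ⟨l₁, h₁, h₁⟩

lemma collinear_symm {x y : G.P} (h : G.collinear x y) : G.collinear y x := by
  obtain ⟨l, hx, hy⟩ := h; exact ⟨l, hy, hx⟩

lemma opp_ne {x y : G.P} (h : G.opp x y) : x ≠ y := by
  rintro rfl; exact h (collinear_refl x)

lemma mem_perp {p A B : G.P} : p ∈ G.perp A B ↔ G.collinear p A ∧ G.collinear p B :=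
  Iff.rfl

lemma mem_span {p x y : G.P} :
    p ∈ G.span x y ↔ ∀ u ∈ G.perp x y, G.collinear p u := Iff.rfl

/-- Uniqueness of the foot of a point on a line. -/
lemma foot_unique {z : G.P} {l : G.Ln} (hz : ¬ G.inc z l) {a b : G.P}
    (ha : G.inc a l) (hb : G.inc b l)
    (hza : G.collinear z a) (hzb : G.collinear z b) : a = b := by
  obtain ⟨ma, hzma, hama⟩ := hza
  obtain ⟨mb, hzmb, hbmb⟩ := hzb
  obtain ⟨q, _, huniq⟩ := G.gq z l hz
  have h1 := huniq (a, ma) ⟨hzma, hama, ha⟩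
  have h2 := huniq (b, mb) ⟨hzmb, hbmb, hb⟩
  exact congrArg Prod.fst (h1.trans h2.symm)

/-- Existence of the foot of a point on a line. -/
lemma foot_exists {z : G.P} {l : G.Ln} (hz : ¬ G.inc z l) :
    ∃ p : G.P, G.inc p l ∧ G.collinear z p := by
  obtain ⟨q, ⟨h1, h2, h3⟩, _⟩ := G.gq z l hz
  exact ⟨q.1, h3, ⟨q.2, h1, h2⟩⟩

/-- Triangle lemma: distinct points of the perp of an opposite pair are opposite. -/
lemma perp_pairwise_opp {A B p q : G.P} (hAB : G.opp A B)
    (hp : p ∈ G.perp A B) (hq : q ∈ G.perp A B) (hne : p ≠ q) : G.opp p q := by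
  intro hpq
  obtain ⟨m, hpm, hqm⟩ := hpq
  by_cases hAm : G.inc A m
  · have hBm : ¬ G.inc B m := fun hBm => hAB ⟨m, hAm, hBm⟩
    exact hne (foot_unique hBm hpm hqm (collinear_symm hp.2) (collinear_symm hq.2))
  · exact hne (foot_unique hAm hpm hqm (collinear_symm hp.1) (collinear_symm hq.1))

lemma x_mem_span {x y : G.P} : x ∈ G.span x y := fun k hk => collinear_symm hk.1

lemma y_mem_span {x y : G.P} : y ∈ G.span x y := fun k hk => collinear_symm hk.2

/-- Exactness: a perp contained in another perp (both through x) is equal to it. -/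
lemma perp_subset_eq {x y z : G.P} (hxy : G.opp x y) (hxz : G.opp x z)
    (hsub : G.perp x y ⊆ G.perp x z) : G.perp x y = G.perp x z := by
  refine Set.Subset.antisymm hsub (fun k hk => ?_)
  obtain ⟨lam, hklam, hxlam⟩ := hk.1
  have hylam : ¬ G.inc y lam := fun h => hxy ⟨lam, hxlam, h⟩
  obtain ⟨f, hflam, hyf⟩ := foot_exists hylam
  have hfmem : f ∈ G.perp x y := ⟨⟨lam, hflam, hxlam⟩, collinear_symm hyf⟩
  have hfz : G.collinear f z := (hsub hfmem).2
  have hzlam : ¬ G.inc z lam := fun h => hxz ⟨lam, hxlam, h⟩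
  have : f = k := foot_unique hzlam hflam hklam (collinear_symm hfz) (collinear_symm hk.2)
  exact this ▸ hfmem

/-- Any perp of an opposite pair has two distinct points. -/
lemma exists_two_perp {x y : G.P} (hxy : G.opp x y) :
    ∃ k₁ k₂ : G.P, k₁ ∈ G.perp x y ∧ k₂ ∈ G.perp x y ∧ k₁ ≠ k₂ := by
  obtain ⟨l₁, l₂, l₃, h12, _, _, hx1, hx2, _⟩ := G.thickPt x
  have hy1 : ¬ G.inc y l₁ := fun h => hxy ⟨l₁, hx1, h⟩
  have hy2 : ¬ G.inc y l₂ := fun h => hxy ⟨l₂, hx2, h⟩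
  obtain ⟨f₁, hf₁, hyf₁⟩ := foot_exists hy1
  obtain ⟨f₂, hf₂, hyf₂⟩ := foot_exists hy2
  refine ⟨f₁, f₂, ⟨⟨l₁, hf₁, hx1⟩, collinear_symm hyf₁⟩,
    ⟨⟨l₂, hf₂, hx2⟩, collinear_symm hyf₂⟩, ?_⟩
  rintro rfl
  have hfx : f₁ ≠ x := fun h => hxy (collinear_symm (h ▸ hyf₁))
  rcases G.pl hf₁ hx1 hf₂ hx2 with h | h
  · exact hfx h
  · exact h12 h

/-- Fiber lemma: a point of span x y other than x is opposite x and has the same perp. -/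
lemma span_fiber {x y s : G.P} (hxy : G.opp x y) (hs : s ∈ G.span x y) (hsx : s ≠ x) :
    G.opp x s ∧ G.perp x y = G.perp x s := by
  obtain ⟨k₁, k₂, hk₁, hk₂, hkne⟩ := exists_two_perp hxy
  have hk12 : G.opp k₁ k₂ := perp_pairwise_opp hxy hk₁ hk₂ hkne
  have hxmem : x ∈ G.perp k₁ k₂ := ⟨collinear_symm hk₁.1, collinear_symm hk₂.1⟩
  have hsmem : s ∈ G.perp k₁ k₂ := ⟨hs k₁ hk₁, hs k₂ hk₂⟩
  have hxs : G.opp x s := perp_pairwise_opp hk12 hxmem hsmem (Ne.symm hsx)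
  refine ⟨hxs, perp_subset_eq hxy hxs (fun k hk => ⟨hk.1, collinear_symm (hs k hk)⟩)⟩

/-- The key uniqueness lemma: two distinct perps through x share at most one point. -/
lemma perp_inter_unique {x y z w₁ w₂ : G.P} (hreg : G.regular x)
    (hxy : G.opp x y) (hxz : G.opp x z) (hne : G.perp x y ≠ G.perp x z)
    (h₁y : w₁ ∈ G.perp x y) (h₁z : w₁ ∈ G.perp x z)
    (h₂y : w₂ ∈ G.perp x y) (h₂z : w₂ ∈ G.perp x z) : w₁ = w₂ := by
  by_contra hw
  -- w₁ opposite w₂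
  have hw12 : G.opp w₁ w₂ := perp_pairwise_opp hxy h₁y h₂y hw
  -- regularity : span x y = perp u v
  obtain ⟨u, v, huv, hspan⟩ := hreg y hxy
  have hxspan : x ∈ G.span x y := x_mem_span
  have hyspan : y ∈ G.span x y := y_mem_span
  have hxuv : x ∈ G.perp u v := hspan ▸ hxspan
  have hyuv : y ∈ G.perp u v := hspan ▸ hyspan
  have humem : u ∈ G.perp x y := ⟨collinear_symm hxuv.1, collinear_symm hyuv.1⟩
  have hvmem : v ∈ G.perp x y := ⟨collinear_symm hxuv.2, collinear_symm hyuv.2⟩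
  -- z not in span x y
  have hzx : z ≠ x := fun e => hxz (by rw [e]; exact collinear_refl x)
  have hzspan : z ∉ G.span x y := by
    intro h
    exact hne ((span_fiber hxy h hzx).2)
  -- z is opposite every point of span x y
  have zopp : ∀ s ∈ G.span x y, G.opp z s := by
    intro s hs
    have hsmem : s ∈ G.perp w₁ w₂ := ⟨hs w₁ h₁y, hs w₂ h₂y⟩
    have hzmem : z ∈ G.perp w₁ w₂ := ⟨collinear_symm h₁z.2, collinear_symm h₂z.2⟩
    have hzs : z ≠ s := fun e => hzspan (by rw [e]; exact hs)
    exact perp_pairwise_opp hw12 hzmem hsmem hzs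
  -- z is opposite u
  have hzu : G.opp z u := by
    intro hzu
    obtain ⟨al, hzal, hual⟩ := hzu
    have hval : ¬ G.inc v al := fun h => huv ⟨al, hual, h⟩
    obtain ⟨h', hh'al, hvh'⟩ := foot_exists hval
    have hh'uv : h' ∈ G.perp u v := ⟨⟨al, hh'al, hual⟩, collinear_symm hvh'⟩
    have hh'span : h' ∈ G.span x y := hspan ▸ hh'uv
    exact zopp h' hh'span ⟨al, hzal, hh'al⟩
  -- u ≠ w₁, u opposite w₁
  have huw₁ : u ≠ w₁ := by
    rintro rfl
    exact hzu (collinear_symm h₁z.2)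
  have huw₁o : G.opp u w₁ := perp_pairwise_opp hxy humem h₁y huw₁
  -- the line α through w₁ and z
  obtain ⟨al, hzal, hw₁al⟩ := collinear_symm h₁z.2
  have hual : ¬ G.inc u al := fun h => hzu ⟨al, hzal, h⟩
  -- h := foot of u on α
  obtain ⟨hu, hhual, huhu⟩ := foot_exists hual
  have hhuw₁ : hu ∈ G.perp u w₁ := ⟨collinear_symm huhu, ⟨al, hhual, hw₁al⟩⟩
  have hhuz : G.collinear z hu := ⟨al, hzal, hhual⟩
  have hhuspan : hu ∉ G.span x y := fun h => zopp hu h hhuz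
  -- span points are all in perp u w₁
  have spanw₁ : ∀ s ∈ G.span x y, s ∈ G.perp u w₁ := by
    intro s hs
    have hsuv : s ∈ G.perp u v := hspan ▸ hs
    exact ⟨hsuv.1, hs w₁ h₁y⟩
  -- the line β through hu and u, and foot of v on it
  obtain ⟨bl, hubl, hhubl⟩ := huhu
  have hvbl : ¬ G.inc v bl := fun h => huv ⟨bl, hubl, h⟩
  obtain ⟨hd, hhdbl, hvhd⟩ := foot_exists hvbl
  have hhduv : hd ∈ G.perp u v := ⟨⟨bl, hhdbl, hubl⟩, collinear_symm hvhd⟩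
  have hhdspan : hd ∈ G.span x y := hspan ▸ hhduv
  have hhduw₁ : hd ∈ G.perp u w₁ := spanw₁ hd hhdspan
  have hhdne : hd ≠ hu := fun e => hhuspan (e ▸ hhdspan)
  have : G.opp hd hu := perp_pairwise_opp huw₁o hhduw₁ hhuw₁ hhdne
  exact this ⟨bl, hhdbl, hhubl⟩

end GenQuadrangle

/-- In a thick generalized quadrangle, a regular point x is projective
if and only if every triad of points containing x has a center. -/
theorem regular_point_projective_iff_every_triad_centric
    (G : GenQuadrangle) (x : G.P) (hx : G.regular x) :
    G.projective x ↔ ∀ y z : G.P, G.triad x y z → ∃ w : G.P, G.center w x y z := by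
  constructor
  · rintro ⟨hreg, huniq⟩ y z ⟨hxy, hyz, hxz⟩
    by_cases hP : G.perp x y = G.perp x z
    · obtain ⟨k₁, k₂, hk₁, _, _⟩ := GenQuadrangle.exists_two_perp hxy
      have hk₁z : k₁ ∈ G.perp x z := hP ▸ hk₁
      exact ⟨k₁, hk₁.1, hk₁.2, hk₁z.2⟩
    · obtain ⟨w, ⟨hw1, hw2⟩, _⟩ := huniq y z hxy hxz hP
      exact ⟨w, hw1.1, hw1.2, hw2.2⟩
  · intro H
    refine ⟨hx, fun y z hxy hxz hne => ?_⟩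
    have hex : ∃ w : G.P, w ∈ G.perp x y ∧ w ∈ G.perp x z := by
      by_cases hyz : G.collinear y z
      · obtain ⟨n, hyn, hzn⟩ := hyz
        have hxn : ¬ G.inc x n := fun h => hxy ⟨n, h, hyn⟩
        obtain ⟨f, hfn, hxf⟩ := GenQuadrangle.foot_exists hxn
        exact ⟨f, ⟨GenQuadrangle.collinear_symm hxf, ⟨n, hfn, hyn⟩⟩,
          ⟨GenQuadrangle.collinear_symm hxf, ⟨n, hfn, hzn⟩⟩⟩
      · obtain ⟨w, hwx, hwy, hwz⟩ := H y z ⟨hxy, hyz, hxz⟩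
        exact ⟨w, ⟨hwx, hwy⟩, ⟨hwx, hwz⟩⟩
    obtain ⟨w₀, hm1, hm2⟩ := hex
    refine ⟨w₀, ⟨hm1, hm2⟩, ?_⟩
    rintro w' ⟨h1, h2⟩
    exact GenQuadrangle.perp_inter_unique hx hxy hxz hne h1 h2 hm1 hm2
end

section
/- Let x and y be opposite points of a thick generalized quadrangle. If x is projective and y is regular, then y is projective. -/
namespace GenQuadrangle

variable {G : GenQuadrangle}

lemma coll_symm {p q : G.P} (h : G.collinear p q) : G.collinear q p := by
  obtain ⟨l, h1, h2⟩ := h; exact ⟨l, h2, h1⟩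

lemma coll_refl (p : G.P) : G.collinear p p := by
  obtain ⟨l1, l2, l3, h12, h13, h23, h1, h2, h3⟩ := G.thickPt p
  exact ⟨l1, h1, h1⟩

/-- projection of a point onto a line not through it -/
lemma proj_ex {p : G.P} {l : G.Ln} (h : ¬ G.inc p l) :
    ∃ q, G.inc q l ∧ G.collinear p q := by
  obtain ⟨⟨q, m⟩, ⟨h1, h2, h3⟩, -⟩ := G.gq p l h
  exact ⟨q, h3, ⟨m, h1, h2⟩⟩

/-- uniqueness of the projection -/
lemma proj_uniq {p : G.P} {l : G.Ln} {q₁ q₂ : G.P} (hpl : ¬ G.inc p l)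
    (h1 : G.inc q₁ l) (h2 : G.inc q₂ l)
    (c1 : G.collinear p q₁) (c2 : G.collinear p q₂) : q₁ = q₂ := by
  obtain ⟨m1, a1, b1⟩ := c1
  obtain ⟨m2, a2, b2⟩ := c2
  obtain ⟨w, hw, hu⟩ := G.gq p l hpl
  have e1 := hu (q₁, m1) ⟨a1, b1, h1⟩
  have e2 := hu (q₂, m2) ⟨a2, b2, h2⟩
  have h : (q₁, m1) = (q₂, m2) := e1.trans e2.symm
  exact congrArg Prod.fst h

/-- two distinct points of the perp of an opposite pair are opposite -/
lemma opp_of_perp {a b u v : G.P} (hab : G.opp a b)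
    (hu : u ∈ G.perp a b) (hv : v ∈ G.perp a b) (huv : u ≠ v) : G.opp u v := by
  rintro ⟨m, hum, hvm⟩
  have ham : G.inc a m := by
    by_contra ha
    exact huv (proj_uniq ha hum hvm (coll_symm hu.1) (coll_symm hv.1))
  have hbm : G.inc b m := by
    by_contra hb
    exact huv (proj_uniq hb hum hvm (coll_symm hu.2) (coll_symm hv.2))
  exact hab ⟨m, ham, hbm⟩

/-- a perp of an opposite pair contained in another one equals it -/
lemma perp_eq_of_subset {y z z' : G.P} (hz : G.opp y z) (hz' : G.opp y z')
    (hsub : G.perp y z ⊆ G.perp y z') : G.perp y z = G.perp y z' := by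
  apply Set.Subset.antisymm hsub
  rintro u' ⟨hu'y, hu'z'⟩
  obtain ⟨L, hu'L, hyL⟩ := hu'y
  have hzL : ¬ G.inc z L := fun h => hz ⟨L, hyL, h⟩
  obtain ⟨p, hpL, hzp⟩ := proj_ex hzL
  have hp : p ∈ G.perp y z := ⟨⟨L, hpL, hyL⟩, coll_symm hzp⟩
  have hpz' : G.collinear p z' := (hsub hp).2
  have hz'L : ¬ G.inc z' L := fun h => hz' ⟨L, hyL, h⟩
  have hpu : p = u' := proj_uniq hz'L hpL hu'L (coll_symm hpz') (coll_symm hu'z')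
  exact hpu ▸ hp

lemma perp_nonempty {x s : G.P} (hxs : G.opp x s) : ∃ u, u ∈ G.perp x s := by
  obtain ⟨l1, l2, l3, h12, h13, h23, h1, h2, h3⟩ := G.thickPt x
  have hs : ¬ G.inc s l1 := fun h => hxs ⟨l1, h1, h⟩
  obtain ⟨u, hul, hsu⟩ := proj_ex hs
  exact ⟨u, ⟨⟨l1, hul, h1⟩, coll_symm hsu⟩⟩

/-- the perp of an opposite pair has two distinct points -/
lemma perp_two {x s : G.P} (hxs : G.opp x s) :
    ∃ u v, u ≠ v ∧ u ∈ G.perp x s ∧ v ∈ G.perp x s := by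
  obtain ⟨l1, l2, l3, h12, h13, h23, h1, h2, h3⟩ := G.thickPt x
  have hs1 : ¬ G.inc s l1 := fun h => hxs ⟨l1, h1, h⟩
  have hs2 : ¬ G.inc s l2 := fun h => hxs ⟨l2, h2, h⟩
  obtain ⟨u, hul, hsu⟩ := proj_ex hs1
  obtain ⟨v, hvl, hsv⟩ := proj_ex hs2
  refine ⟨u, v, ?_, ⟨⟨l1, hul, h1⟩, coll_symm hsu⟩, ⟨⟨l2, hvl, h2⟩, coll_symm hsv⟩⟩
  rintro rfl
  rcases G.pl hul h1 hvl h2 with h | h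
  · exact hxs (h ▸ coll_symm hsu)
  · exact h12 h

/-- two distinct common points force equality of perps through a projective point -/
lemma perp_eq_of_two {x p q c d : G.P} (hx : G.projective x)
    (hp : G.opp x p) (hq : G.opp x q) (hcd : c ≠ d)
    (h1 : c ∈ G.perp x p) (h2 : c ∈ G.perp x q)
    (h3 : d ∈ G.perp x p) (h4 : d ∈ G.perp x q) : G.perp x p = G.perp x q := by
  by_contra hne
  obtain ⟨w0, -, huniq⟩ := hx.2 p q hp hq hne
  exact hcd ((huniq c ⟨h1, h2⟩).trans (huniq d ⟨h3, h4⟩).symm)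

/-- key lemma (Q): every line through a point g of {x,v}^⊥ not through x
contains a point collinear with all of {x,v}^⊥. -/
lemma qspan {x v g : G.P} {L : G.Ln} (hx : G.projective x) (hxv : G.opp x v)
    (hg : g ∈ G.perp x v) (hgL : G.inc g L) (hxL : ¬ G.inc x L) :
    ∃ u, G.inc u L ∧ ∀ s ∈ G.perp x v, G.collinear u s := by
  obtain ⟨u₁, u₂, h12, hu1, hu2⟩ := perp_two hxv
  obtain ⟨c, hc, hcg⟩ : ∃ c, c ∈ G.perp x v ∧ c ≠ g := by
    by_cases h : u₁ = g
    · exact ⟨u₂, hu2, fun he => h12 (h.trans he.symm)⟩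
    · exact ⟨u₁, hu1, h⟩
  have hocg : G.opp c g := opp_of_perp hxv hc hg hcg
  have hcL : ¬ G.inc c L := fun h => hocg ⟨L, h, hgL⟩
  obtain ⟨u, huL, hcu⟩ := proj_ex hcL
  have hxu : G.opp x u := by
    intro hcoll
    have hug : u = g := proj_uniq hxL huL hgL hcoll (coll_symm hg.1)
    exact hocg (hug ▸ hcu)
  have hcpu : c ∈ G.perp x u := ⟨hc.1, hcu⟩
  have hgpu : g ∈ G.perp x u := ⟨hg.1, ⟨L, hgL, huL⟩⟩
  have heq : G.perp x u = G.perp x v := perp_eq_of_two hx hxu hxv hcg hcpu hc hgpu hg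
  refine ⟨u, huL, fun s hs => ?_⟩
  rw [← heq] at hs
  exact coll_symm hs.2

/-- (S): every perp of an opposite pair contains a point collinear with
a projective point x -/
lemma exists_perp_collinear {x a b : G.P} (hx : G.projective x) (hab : G.opp a b) :
    ∃ u, u ∈ G.perp a b ∧ G.collinear u x := by
  by_cases hxa : G.collinear x a
  · by_cases hxb : G.collinear x b
    · exact ⟨x, ⟨hxa, hxb⟩, coll_refl x⟩
    · -- x ⊥ a, x opp b
      by_cases hxea : x = a
      · obtain ⟨u, hu⟩ := perp_nonempty (hxb : G.opp x b)
        exact ⟨u, ⟨hxea ▸ hu.1, hu.2⟩, hu.1⟩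
      · obtain ⟨m, hxm, ham⟩ := hxa
        have hbm : ¬ G.inc b m := fun h => hxb ⟨m, hxm, h⟩
        obtain ⟨u, hum, hbu⟩ := proj_ex hbm
        exact ⟨u, ⟨⟨m, hum, ham⟩, coll_symm hbu⟩, ⟨m, hum, hxm⟩⟩
  · by_cases hxb : G.collinear x b
    · -- x opp a, x ⊥ b
      by_cases hxeb : x = b
      · obtain ⟨u, hu⟩ := perp_nonempty (hxa : G.opp x a)
        exact ⟨u, ⟨hu.2, hxeb ▸ hu.1⟩, hu.1⟩
      · obtain ⟨m, hxm, hbm⟩ := hxb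
        have ham : ¬ G.inc a m := fun h => hxa ⟨m, hxm, h⟩
        obtain ⟨u, hum, hau⟩ := proj_ex ham
        exact ⟨u, ⟨coll_symm hau, ⟨m, hum, hbm⟩⟩, ⟨m, hum, hxm⟩⟩
    · -- x opp a, x opp b
      by_cases heq : G.perp x a = G.perp x b
      · obtain ⟨u, hu⟩ := perp_nonempty (hxa : G.opp x a)
        have hu' : u ∈ G.perp x b := heq ▸ hu
        exact ⟨u, ⟨hu.2, hu'.2⟩, hu.1⟩
      · obtain ⟨g, ⟨hg1, hg2⟩, -⟩ := hx.2 a b hxa hxb heq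
        exact ⟨g, ⟨hg1.2, hg2.2⟩, hg1.1⟩

/-- (R): any point opposite a regular point y (with x projective opposite y)
can be replaced by a point collinear with x having the same perp with y -/
lemma replace {x y w : G.P} (hx : G.projective x) (hy : G.regular y)
    (hxy : G.opp x y) (hw : G.opp y w) :
    ∃ w', G.collinear w' x ∧ G.opp y w' ∧ G.perp y w' = G.perp y w := by
  obtain ⟨a, b, hab, hspan⟩ := hy w hw
  obtain ⟨w', hw'ab, hw'x⟩ := exists_perp_collinear hx hab
  have hw'span : w' ∈ G.span y w := by rw [hspan]; exact hw'ab
  have hyspan : y ∈ G.span y w := fun u hu => coll_symm hu.1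
  have hyab : y ∈ G.perp a b := by rw [← hspan]; exact hyspan
  have hw'y : w' ≠ y := fun h => hxy (coll_symm (h ▸ hw'x))
  have hoyw' : G.opp y w' := opp_of_perp hab hyab hw'ab (fun h => hw'y h.symm)
  have hsub : G.perp y w ⊆ G.perp y w' := by
    rintro u ⟨huy, huw⟩
    exact ⟨huy, coll_symm (hw'span u ⟨huy, huw⟩)⟩
  exact ⟨w', hw'x, hoyw', (perp_eq_of_subset hw hoyw' hsub).symm⟩

/-- existence of a common point when both replaced points are collinear with x -/
lemma center_exists_aux {x y z' w' : G.P} (hx : G.projective x) (hxy : G.opp x y)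
    (hz'x : G.collinear z' x) (hw'x : G.collinear w' x)
    (hyz' : G.opp y z') (hyw' : G.opp y w') (hzw : G.opp z' w') :
    ∃ u, u ∈ G.perp y z' ∧ u ∈ G.perp y w' := by
  have hxzw : x ∈ G.perp z' w' := ⟨coll_symm hz'x, coll_symm hw'x⟩
  obtain ⟨u₁, u₂, h12, hu1, hu2⟩ := perp_two hzw
  obtain ⟨v, hv, hvx⟩ : ∃ v, v ∈ G.perp z' w' ∧ v ≠ x := by
    by_cases h : u₁ = x
    · exact ⟨u₂, hu2, fun he => h12 (h.trans he.symm)⟩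
    · exact ⟨u₁, hu1, h⟩
  have hxv : G.opp x v := fun h => (opp_of_perp hzw hv hxzw hvx) (coll_symm h)
  have hz'v : z' ∈ G.perp x v := ⟨hz'x, coll_symm hv.1⟩
  have hw'v : w' ∈ G.perp x v := ⟨hw'x, coll_symm hv.2⟩
  have hne : G.perp x y ≠ G.perp x v := by
    intro h
    have hz'y : z' ∈ G.perp x y := by rw [h]; exact hz'v
    exact hyz' (coll_symm hz'y.2)
  obtain ⟨g, ⟨hgy, hgv⟩, -⟩ := hx.2 y v hxy hxv hne
  obtain ⟨L, hgL, hyL⟩ := hgy.2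
  have hxL : ¬ G.inc x L := fun h => hxy ⟨L, h, hyL⟩
  obtain ⟨u, huL, hucoll⟩ := qspan hx hxv hgv hgL hxL
  exact ⟨u, ⟨⟨L, huL, hyL⟩, hucoll z' hz'v⟩, ⟨⟨L, huL, hyL⟩, hucoll w' hw'v⟩⟩

/-- existence of a common point of two perps through y -/
lemma center_exists {x y z w : G.P} (hx : G.projective x) (hy : G.regular y)
    (hxy : G.opp x y) (hz : G.opp y z) (hw : G.opp y w) :
    ∃ u, u ∈ G.perp y z ∧ u ∈ G.perp y w := by
  obtain ⟨z', hz'x, hyz', hez⟩ := replace hx hy hxy hz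
  obtain ⟨w', hw'x, hyw', hew⟩ := replace hx hy hxy hw
  rw [← hez, ← hew]
  by_cases hzw : z' = w'
  · subst hzw
    obtain ⟨u, hu⟩ := perp_nonempty hyz'
    exact ⟨u, hu, hu⟩
  · by_cases hcol : G.collinear z' w'
    · obtain ⟨m, hz'm, hw'm⟩ := hcol
      have hym : ¬ G.inc y m := fun h => hyz' ⟨m, h, hz'm⟩
      obtain ⟨u, hum, hyu⟩ := proj_ex hym
      exact ⟨u, ⟨coll_symm hyu, ⟨m, hum, hz'm⟩⟩, ⟨coll_symm hyu, ⟨m, hum, hw'm⟩⟩⟩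
    · exact center_exists_aux hx hxy hz'x hw'x hyz' hyw' hcol

/-- uniqueness of the common point -/
lemma center_unique {x y z w p q : G.P} (hx : G.projective x) (hy : G.regular y)
    (hxy : G.opp x y) (hz : G.opp y z) (hw : G.opp y w)
    (hne : G.perp y z ≠ G.perp y w)
    (hp : p ∈ G.perp y z ∧ p ∈ G.perp y w) (hq : q ∈ G.perp y z ∧ q ∈ G.perp y w)
    (hpq : p ≠ q) : False := by
  obtain ⟨z', hz'x, hyz', hez⟩ := replace hx hy hxy hz
  obtain ⟨w', hw'x, hyw', hew⟩ := replace hx hy hxy hw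
  rw [← hez] at hp hq hne
  rw [← hew] at hp hq hne
  have hzw' : z' ≠ w' := fun h => hne (by rw [h])
  have hopq : G.opp p q := opp_of_perp hyz' hp.1 hq.1 hpq
  by_cases hcol : G.collinear z' w'
  · obtain ⟨m, hz'm, hw'm⟩ := hcol
    have hpm : G.inc p m := by
      by_contra hpm
      exact hzw' (proj_uniq hpm hz'm hw'm hp.1.2 hp.2.2)
    have hqm : G.inc q m := by
      by_contra hqm
      exact hzw' (proj_uniq hqm hz'm hw'm hq.1.2 hq.2.2)
    exact hopq ⟨m, hpm, hqm⟩
  · -- z' opp w'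
    have hxzw : x ∈ G.perp z' w' := ⟨coll_symm hz'x, coll_symm hw'x⟩
    have hpzw : p ∈ G.perp z' w' := ⟨hp.1.2, hp.2.2⟩
    have hqzw : q ∈ G.perp z' w' := ⟨hq.1.2, hq.2.2⟩
    have hpx : p ≠ x := fun h => hxy (coll_symm (h ▸ coll_symm hp.1.1))
    have hqx : q ≠ x := fun h => hxy (coll_symm (h ▸ coll_symm hq.1.1))
    have hoxp : G.opp x p := opp_of_perp hcol hxzw hpzw (fun h => hpx h.symm)
    have hoxq : G.opp x q := opp_of_perp hcol hxzw hqzw (fun h => hqx h.symm)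
    have hz'p : z' ∈ G.perp x p := ⟨hz'x, coll_symm hp.1.2⟩
    have hz'q : z' ∈ G.perp x q := ⟨hz'x, coll_symm hq.1.2⟩
    have hw'p : w' ∈ G.perp x p := ⟨hw'x, coll_symm hp.2.2⟩
    have hw'q : w' ∈ G.perp x q := ⟨hw'x, coll_symm hq.2.2⟩
    have heq : G.perp x p = G.perp x q :=
      perp_eq_of_two hx hoxp hoxq hzw' hz'p hz'q hw'p hw'q
    obtain ⟨N, hyN, hqN⟩ := coll_symm hq.1.1
    have hxN : ¬ G.inc x N := fun h => hxy ⟨N, h, hyN⟩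
    obtain ⟨t, htN, hxt⟩ := proj_ex hxN
    have htq : t ∈ G.perp x q := ⟨coll_symm hxt, ⟨N, htN, hqN⟩⟩
    have htp : G.collinear t p := by
      have h : t ∈ G.perp x p := by rw [heq]; exact htq
      exact h.2
    have hty : t ≠ y := fun h => hxy (h ▸ hxt)
    have hpN : G.inc p N := by
      by_contra hpN
      exact hty (proj_uniq hpN htN hyN (coll_symm htp) hp.1.1)
    exact hopq ⟨N, hpN, hqN⟩

end GenQuadrangle

/-- Let x and y be opposite points of a thick generalized quadrangle.
If x is projective and y is regular, then y is projective. -/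
theorem projective_of_opp_projective_regular
    (G : GenQuadrangle) (x y : G.P) (hopp : G.opp x y)
    (hx : G.projective x) (hy : G.regular y) :
    G.projective y := by
  refine ⟨hy, fun z w hz hw hne => ?_⟩
  obtain ⟨u, hu⟩ := GenQuadrangle.center_exists hx hy hopp hz hw
  refine ⟨u, hu, fun r hr => ?_⟩
  by_contra hru
  exact GenQuadrangle.center_unique hx hy hopp hz hw hne hr hu hru
end
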